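/- Let g be a finite-dimensional simple real Lie algebra and let ν : g → g be a Lie algebra automorphism with ν^k = id for some integer k ≥ 2 and ν ≠ id; set h := ker(id − ν) and m := range(id − ν). Then the subspace c := m + span⁅m, m⁆ is a nonzero Lie ideal of g, hence c = g. Consequently the pair (g, ν) is prime: every Lie ideal of g contained in h is zero, and the projection of span⁅m, m⁆ onto h along m is all of h (i.e. [m, m]_h = h). -/

import Mathlib

section
variable {L : Type*} [LieRing L] [LieAlgebra ℝ L]

/-- Decomposition: every `x` splits as a `ν`-fixed part plus a part in `range (1 - ν)`. -/
lemma st4_decomp (ν : Module.End ℝ L) (k : ℕ) (hk : 2 ≤ k) (hν : ν ^ k = 1) (x : L) :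
    ∃ h : L, ν h = h ∧ x - h ∈ LinearMap.range (1 - ν) := by
  have hk0 : (k : ℝ) ≠ 0 := by positivity
  set S : L := ∑ i ∈ Finset.range k, (ν ^ i) x with hS
  refine ⟨(k : ℝ)⁻¹ • S, ?_, ?_⟩
  · have key : ∑ i ∈ Finset.range k, (ν ^ (i + 1)) x = S := by
      obtain ⟨n, rfl⟩ : ∃ n, k = n + 1 := ⟨k - 1, by omega⟩
      rw [hS, Finset.sum_range_succ, Finset.sum_range_succ']
      have h1 : (ν ^ (n + 1)) x = x := by rw [hν]; simp
      have h2 : (ν ^ 0) x = x := by simp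
      rw [h1, h2]
    rw [map_smul, hS, map_sum]
    congr 1
    calc ∑ i ∈ Finset.range k, ν ((ν ^ i) x)
        = ∑ i ∈ Finset.range k, (ν ^ (i + 1)) x := by
          refine Finset.sum_congr rfl fun i _ => ?_
          rw [pow_succ']; rfl
      _ = S := key
  · have hmem : ∀ i : ℕ, x - (ν ^ i) x ∈ LinearMap.range (1 - ν) := by
      intro i
      refine ⟨(∑ j ∈ Finset.range i, ν ^ j) x, ?_⟩
      have h1 : (1 - ν) * ∑ j ∈ Finset.range i, ν ^ j = 1 - ν ^ i := by
        have h2 := mul_geom_sum ν i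
        have h3 : (1 - ν) = -(ν - 1) := by rw [neg_sub]
        rw [h3, neg_mul, h2, neg_sub]
      calc (1 - ν) ((∑ j ∈ Finset.range i, ν ^ j) x)
          = ((1 - ν) * ∑ j ∈ Finset.range i, ν ^ j) x := rfl
        _ = (1 - ν ^ i) x := by rw [h1]
        _ = x - (ν ^ i) x := by simp [LinearMap.sub_apply]
    have heq : x - (k : ℝ)⁻¹ • S
        = (k : ℝ)⁻¹ • ∑ i ∈ Finset.range k, (x - (ν ^ i) x) := by
      rw [Finset.sum_sub_distrib, smul_sub, hS]
      congr 1
      rw [Finset.sum_const, Finset.card_range, ← Nat.cast_smul_eq_nsmul ℝ, smul_smul,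
        inv_mul_cancel₀ hk0, one_smul]
    rw [heq]
    exact Submodule.smul_mem _ _ (Submodule.sum_mem _ fun i _ => hmem i)

end

theorem statement4 {L : Type*} [LieRing L] [LieAlgebra ℝ L] [FiniteDimensional ℝ L]
    [LieAlgebra.IsSimple ℝ L]
    (ν : Module.End ℝ L) (hbr : ∀ x y : L, ν ⁅x, y⁆ = ⁅ν x, ν y⁆)
    (k : ℕ) (hk : 2 ≤ k) (hν : ν ^ k = 1) (hne : ν ≠ 1) :
    (∃ C : LieIdeal ℝ L,
        (C : Submodule ℝ L) =
          LinearMap.range (1 - ν) ⊔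
            Submodule.span ℝ
              {z : L | ∃ a ∈ LinearMap.range (1 - ν), ∃ b ∈ LinearMap.range (1 - ν), ⁅a, b⁆ = z}) ∧
    (LinearMap.range (1 - ν) ⊔
        Submodule.span ℝ
          {z : L | ∃ a ∈ LinearMap.range (1 - ν), ∃ b ∈ LinearMap.range (1 - ν), ⁅a, b⁆ = z}
        ≠ ⊥) ∧
    (LinearMap.range (1 - ν) ⊔
        Submodule.span ℝ
          {z : L | ∃ a ∈ LinearMap.range (1 - ν), ∃ b ∈ LinearMap.range (1 - ν), ⁅a, b⁆ = z}
        = ⊤) ∧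
    (∀ I : LieIdeal ℝ L, (I : Set L) ⊆ (LinearMap.ker (1 - ν) : Submodule ℝ L) → I = ⊥) ∧
    (∀ x ∈ LinearMap.ker (1 - ν),
      ∃ y ∈ Submodule.span ℝ
          {z : L | ∃ a ∈ LinearMap.range (1 - ν), ∃ b ∈ LinearMap.range (1 - ν), ⁅a, b⁆ = z},
        y - x ∈ LinearMap.range (1 - ν)) := by
  set m : Submodule ℝ L := LinearMap.range (1 - ν) with hm
  set bs : Submodule ℝ L :=
    Submodule.span ℝ {z : L | ∃ a ∈ m, ∃ b ∈ m, ⁅a, b⁆ = z} with hbs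
  set c : Submodule ℝ L := m ⊔ bs with hc
  -- brackets of fixed vectors with m land in m
  have hfixm : ∀ h : L, ν h = h → ∀ a ∈ m, ⁅h, a⁆ ∈ m := by
    rintro h hh a ⟨y, rfl⟩
    refine ⟨⁅h, y⁆, ?_⟩
    show ⁅h, y⁆ - ν ⁅h, y⁆ = ⁅h, y - ν y⁆
    rw [hbr, hh, lie_sub]
  have hmm : ∀ a ∈ m, ∀ b ∈ m, ⁅a, b⁆ ∈ bs := fun a ha b hb =>
    Submodule.subset_span ⟨a, ha, b, hb, rfl⟩
  -- Lemma A : brackets of anything with m land in c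
  have hA : ∀ x : L, ∀ a ∈ m, ⁅x, a⁆ ∈ c := by
    intro x a ha
    obtain ⟨h, hh, hxm⟩ := st4_decomp ν k hk hν x
    have : ⁅x, a⁆ = ⁅h, a⁆ + ⁅x - h, a⁆ := by rw [← add_lie, add_sub_cancel]
    rw [this]
    exact Submodule.add_mem _
      (Submodule.mem_sup_left (hfixm h hh a ha))
      (Submodule.mem_sup_right (hmm _ hxm _ ha))
  -- Lemma B : brackets of anything with bs land in c
  have hB : ∀ x : L, ∀ z ∈ bs, ⁅x, z⁆ ∈ c := by
    intro x z hz
    induction hz using Submodule.span_induction with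
    | mem w hw =>
      obtain ⟨a, ha, b, hb, rfl⟩ := hw
      rw [leibniz_lie]
      refine Submodule.add_mem _ (hA _ _ hb) ?_
      have : ⁅a, ⁅x, b⁆⁆ = -⁅⁅x, b⁆, a⁆ := by rw [lie_skew]
      rw [this]
      exact Submodule.neg_mem _ (hA _ _ ha)
    | zero => simp
    | add u v _ _ hu hv => rw [lie_add]; exact Submodule.add_mem _ hu hv
    | smul t u _ hu => rw [lie_smul]; exact Submodule.smul_mem _ _ hu
  -- c is closed under brackets with anything
  have hC : ∀ x : L, ∀ y ∈ c, ⁅x, y⁆ ∈ c := by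
    intro x y hy
    obtain ⟨a, ha, z, hz, rfl⟩ := Submodule.mem_sup.mp hy
    rw [lie_add]
    exact Submodule.add_mem _ (hA x a ha) (hB x z hz)
  -- the Lie ideal
  let C : LieIdeal ℝ L := { c with lie_mem := fun {x y} hy => hC x y hy }
  have hCcoe : (C : Submodule ℝ L) = c := rfl
  -- nonzero
  have hcne : c ≠ ⊥ := by
    have : ∃ y : L, ν y ≠ y := by
      by_contra h
      push_neg at h
      exact hne (LinearMap.ext fun y => by simp [h y])
    obtain ⟨y, hy⟩ := this
    intro hbot
    have h1 : y - ν y ∈ c := Submodule.mem_sup_left ⟨y, rfl⟩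
    rw [hbot, Submodule.mem_bot, sub_eq_zero] at h1
    exact hy h1.symm
  -- equals top
  have hctop : c = ⊤ := by
    rcases LieAlgebra.IsSimple.eq_bot_or_eq_top C with h | h
    · exact absurd (by rw [← hCcoe, h]; rfl) hcne
    · rw [← hCcoe, h]; rfl
  refine ⟨⟨C, hCcoe⟩, hcne, hctop, ?_, ?_⟩
  · -- ideals inside the fixed algebra are zero
    intro I hI
    rw [LieSubmodule.eq_bot_iff]
    intro x hx
    have hfix : ∀ w ∈ I, ν w = w := by
      intro w hw
      have := hI hw
      simp only [SetLike.mem_coe, LinearMap.mem_ker, LinearMap.sub_apply,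
        Module.End.one_apply, sub_eq_zero] at this
      exact this.symm
    -- x commutes with m
    have hxm : ∀ a ∈ m, ⁅x, a⁆ = 0 := by
      rintro a ⟨y, rfl⟩
      have h1 : ⁅x, y⁆ ∈ I := by
        have := I.lie_mem (x := y) hx
        have h2 : ⁅x, y⁆ = -⁅y, x⁆ := by rw [lie_skew]
        rw [h2]; exact I.neg_mem this
      have h2 : ν ⁅x, y⁆ = ⁅x, y⁆ := hfix _ h1
      rw [hbr, hfix _ hx] at h2
      show ⁅x, (1 - ν) y⁆ = 0
      have : (1 - ν) y = y - ν y := rfl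
      rw [this, lie_sub, h2, sub_self]
    -- x commutes with bs
    have hxbs : ∀ z ∈ bs, ⁅x, z⁆ = 0 := by
      intro z hz
      induction hz using Submodule.span_induction with
      | mem w hw =>
        obtain ⟨a, ha, b, hb, rfl⟩ := hw
        rw [leibniz_lie, hxm a ha, hxm b hb, zero_lie, lie_zero, add_zero]
      | zero => simp
      | add u v _ _ hu hv => rw [lie_add, hu, hv, add_zero]
      | smul t u _ hu => rw [lie_smul, hu, smul_zero]
    -- x is central
    have hcentral : x ∈ LieAlgebra.center ℝ L := by
      intro y
      have hy : y ∈ c := hctop ▸ Submodule.mem_top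
      obtain ⟨a, ha, z, hz, rfl⟩ := Submodule.mem_sup.mp hy
      have : ⁅a + z, x⁆ = -⁅x, a + z⁆ := by rw [← lie_skew]
      rw [this, lie_add, hxm a ha, hxbs z hz, add_zero, neg_zero]
    rw [LieAlgebra.center_eq_bot] at hcentral
    exact (LieSubmodule.mem_bot _).mp hcentral
  · -- projection of bs onto h along m is everything
    intro x hx
    have hxc : x ∈ c := hctop ▸ Submodule.mem_top
    obtain ⟨a, ha, z, hz, hsum⟩ := Submodule.mem_sup.mp hxc
    refine ⟨z, hz, ?_⟩
    have : z - x = -a := by rw [← hsum]; abel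
    rw [this]
    exact Submodule.neg_mem _ ha
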